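/- Let G be an n-edge-coloured multigraph in which each colour class is a matching of size at least n + 20 n^{15/16}, with n sufficiently large. Assume (as a black box) that every n-edge-coloured multigraph whose colour classes are matchings of size at least n + 20n^{7/8} contains a rainbow matching of size at least n - 20 n^{7/8}. Then G contains a full rainbow matching using all n colours. -/

import Mathlib

open Finset
open scoped Classical

section Defs

variable {V C E : Type*}

/-- The two endpoints of an edge of a multigraph given by endpoint functions `e₁ e₂`. -/
def edgeEnds [DecidableEq V] (e₁ e₂ : E → V) (e : E) : Finset V := {e₁ e, e₂ e}

/-- A finite set of edges is a matching: all edges are non-loops and pairwise vertex-disjoint. -/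
def IsMatchingE [DecidableEq V] (e₁ e₂ : E → V) (M : Finset E) : Prop :=
  (∀ e ∈ M, e₁ e ≠ e₂ e) ∧
  ∀ a ∈ M, ∀ b ∈ M, a ≠ b → Disjoint (edgeEnds e₁ e₂ a) (edgeEnds e₁ e₂ b)

/-- A set of edges is rainbow: all its edges have pairwise distinct colours. -/
def IsRainbow (col : E → C) (M : Finset E) : Prop := Set.InjOn col ↑M

/-- The colour class of colour `c`: the set of all edges of colour `c`. -/
noncomputable def colourClass [Fintype E] (col : E → C) (c : C) : Finset E :=
  Finset.univ.filter fun e => col e = c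

/-- The set of vertices covered by a set of edges `M`. -/
def matchedVerts [DecidableEq V] (e₁ e₂ : E → V) (M : Finset E) : Finset V :=
  M.biUnion (edgeEnds e₁ e₂)

/-- The set of vertices spanned by the colour class of `c`
(i.e. incident to at least one edge of colour `c`). -/
noncomputable def spannedVerts [Fintype V] [DecidableEq V] [Fintype E]
    (e₁ e₂ : E → V) (col : E → C) (c : C) : Finset V :=
  Finset.univ.filter fun v => ∃ e, col e = c ∧ (e₁ e = v ∨ e₂ e = v)

/-- `u` and `v` are distinct vertices joined by an edge of colour `c`. -/
def adjOfColour (e₁ e₂ : E → V) (col : E → C) (c : C) (u v : V) : Prop :=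
  u ≠ v ∧ ∃ e, col e = c ∧ ((e₁ e = u ∧ e₂ e = v) ∨ (e₁ e = v ∧ e₂ e = u))

/-- The colour class of `c` is a vertex-disjoint union of (non-trivial) cliques:
whenever `uv` and `vw` are edges of colour `c` with `u ≠ w`, also `uw` is an
edge of colour `c`. -/
def IsCliqueUnion (e₁ e₂ : E → V) (col : E → C) (c : C) : Prop :=
  ∀ u v w, adjOfColour e₁ e₂ col c u v → adjOfColour e₁ e₂ col c v w → u ≠ w →
    adjOfColour e₁ e₂ col c u w

end Defs



namespace Stmt10Aux

set_option linter.unusedSectionVars false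

variable {V : Type*} [DecidableEq V]

/-- Expectation over random subsets of `A`, each element included with probability `p`. -/
noncomputable def ExA (p : ℝ) (A : Finset V) (f : Finset V → ℝ) : ℝ :=
  ∑ T ∈ A.powerset, p ^ T.card * (1 - p) ^ (A.card - T.card) * f T

lemma ExA_empty (p : ℝ) (f : Finset V → ℝ) : ExA p ∅ f = f ∅ := by
  simp [ExA]

lemma ExA_insert (p : ℝ) {a : V} {A : Finset V} (ha : a ∉ A) (f : Finset V → ℝ) :
    ExA p (insert a A) f
      = p * ExA p A (fun T => f (insert a T)) + (1 - p) * ExA p A f := by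
  unfold ExA
  rw [Finset.sum_powerset_insert ha]
  rw [Finset.mul_sum, Finset.mul_sum]
  rw [add_comm]
  congr 1
  · apply Finset.sum_congr rfl
    intro T hT
    have hTA : T ⊆ A := Finset.mem_powerset.mp hT
    have haT : a ∉ T := fun h => ha (hTA h)
    have h1 : (insert a T).card = T.card + 1 := Finset.card_insert_of_notMem haT
    have h2 : (insert a A).card = A.card + 1 := Finset.card_insert_of_notMem ha
    have h3 : T.card ≤ A.card := Finset.card_le_card hTA
    rw [h1, h2]
    have h4 : A.card + 1 - (T.card + 1) = A.card - T.card := by omega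
    rw [h4, pow_succ]
    ring
  · apply Finset.sum_congr rfl
    intro T hT
    have hTA : T ⊆ A := Finset.mem_powerset.mp hT
    have h3 : T.card ≤ A.card := Finset.card_le_card hTA
    have h2 : (insert a A).card = A.card + 1 := Finset.card_insert_of_notMem ha
    rw [h2]
    have h4 : A.card + 1 - T.card = (A.card - T.card) + 1 := by omega
    rw [h4, pow_succ]
    ring

lemma ExA_const (p : ℝ) (A : Finset V) (c : ℝ) : ExA p A (fun _ => c) = c := by
  induction A using Finset.induction with
  | empty => simp [ExA]
  | insert _ _ ha ih =>
      rw [ExA_insert p ha]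
      rw [ih]
      ring

lemma ExA_congr (p : ℝ) (A : Finset V) {f g : Finset V → ℝ}
    (h : ∀ T ⊆ A, f T = g T) : ExA p A f = ExA p A g := by
  unfold ExA
  exact Finset.sum_congr rfl fun T hT => by rw [h T (Finset.mem_powerset.mp hT)]

lemma ExA_mul_const (p : ℝ) (A : Finset V) (f : Finset V → ℝ) (c : ℝ) :
    ExA p A (fun T => f T * c) = ExA p A f * c := by
  unfold ExA
  rw [Finset.sum_mul]
  exact Finset.sum_congr rfl fun T _ => by ring

lemma ExA_const_mul (p : ℝ) (A : Finset V) (f : Finset V → ℝ) (c : ℝ) :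
    ExA p A (fun T => c * f T) = c * ExA p A f := by
  unfold ExA
  rw [Finset.mul_sum]
  exact Finset.sum_congr rfl fun T _ => by ring

lemma ExA_add (p : ℝ) (A : Finset V) (f g : Finset V → ℝ) :
    ExA p A (fun T => f T + g T) = ExA p A f + ExA p A g := by
  unfold ExA
  rw [← Finset.sum_add_distrib]
  exact Finset.sum_congr rfl fun T _ => by ring

lemma ExA_sum (p : ℝ) (A : Finset V) {ι : Type*} (s : Finset ι) (f : ι → Finset V → ℝ) :
    ExA p A (fun T => ∑ i ∈ s, f i T) = ∑ i ∈ s, ExA p A (f i) := by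
  induction s using Finset.induction with
  | empty => simp [ExA_const]
  | insert _ _ hi ih =>
      rw [Finset.sum_insert hi, ← ih, ← ExA_add]
      apply ExA_congr
      intro T _
      rw [Finset.sum_insert hi]

lemma ExA_mono (p : ℝ) (hp0 : 0 ≤ p) (hp1 : p ≤ 1) (A : Finset V) {f g : Finset V → ℝ}
    (h : ∀ T ⊆ A, f T ≤ g T) : ExA p A f ≤ ExA p A g := by
  unfold ExA
  apply Finset.sum_le_sum
  intro T hT
  have w0 : (0:ℝ) ≤ p ^ T.card * (1 - p) ^ (A.card - T.card) :=
    mul_nonneg (pow_nonneg hp0 _) (pow_nonneg (by linarith) _)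
  exact mul_le_mul_of_nonneg_left (h T (Finset.mem_powerset.mp hT)) w0

/-- Fubini for disjoint vertex sets. -/
lemma ExA_union (p : ℝ) {A B : Finset V} (hAB : Disjoint A B) (f : Finset V → ℝ) :
    ExA p (A ∪ B) f = ExA p A (fun T => ExA p B (fun U => f (T ∪ U))) := by
  induction A using Finset.induction generalizing f with
  | empty =>
      rw [Finset.empty_union, ExA_empty]
      apply ExA_congr
      intro T _
      rw [Finset.empty_union]
  | @insert a A ha ih =>
      have haB : a ∉ B := Finset.disjoint_left.mp hAB (Finset.mem_insert_self a A)
      have hAB' : Disjoint A B := Finset.disjoint_of_subset_left (Finset.subset_insert a A) hAB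
      have haAB : a ∉ A ∪ B := by
        simp only [Finset.mem_union]
        tauto
      rw [Finset.insert_union, ExA_insert p haAB, ExA_insert p ha,
        ih hAB' f, ih hAB' (fun T => f (insert a T))]
      congr 2
      apply ExA_congr
      intro T _
      apply ExA_congr
      intro U _
      rw [Finset.insert_union]

end Stmt10Aux

namespace Stmt10Aux

variable {V : Type*} [DecidableEq V]

/-- Independence: expectation of a product of functions depending on pairwise
disjoint vertex sets factorises. -/
lemma ExA_prod_indep (p : ℝ) {ι : Type*} (K : Finset ι) :
    ∀ (A : Finset V) (B : ι → Finset V) (g : ι → Finset V → ℝ),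
    (∀ e ∈ K, B e ⊆ A) →
    (∀ a ∈ K, ∀ b ∈ K, a ≠ b → Disjoint (B a) (B b)) →
    ExA p A (fun T => ∏ e ∈ K, g e (T ∩ B e))
      = ∏ e ∈ K, ExA p (B e) (fun T => g e (T ∩ B e)) := by
  induction K using Finset.induction with
  | empty =>
      intro A B g _ _
      simp [ExA_const]
  | @insert e K he ih =>
      intro A B g hsub hdisj
      have hBeA : B e ⊆ A := hsub e (Finset.mem_insert_self e K)
      have hA : A = B e ∪ (A \ B e) := (Finset.union_sdiff_of_subset hBeA).symm
      have hdis : Disjoint (B e) (A \ B e) := Finset.disjoint_sdiff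
      rw [hA, ExA_union p hdis]
      have step1 : ExA p (B e) (fun T => ExA p (A \ B e)
            (fun U => ∏ e' ∈ insert e K, g e' ((T ∪ U) ∩ B e')))
          = ExA p (B e) (fun T => g e (T ∩ B e) *
              ∏ e' ∈ K, ExA p (B e') (fun T' => g e' (T' ∩ B e'))) := by
        apply ExA_congr
        intro T hT
        have inner : ∀ U ⊆ A \ B e,
            (∏ e' ∈ insert e K, g e' ((T ∪ U) ∩ B e'))
              = g e (T ∩ B e) * ∏ e' ∈ K, g e' (U ∩ B e') := by
          intro U hU
          rw [Finset.prod_insert he]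
          congr 1
          · congr 1
            have hUBe : Disjoint U (B e) :=
              Finset.disjoint_of_subset_left hU Finset.sdiff_disjoint
            rw [Finset.union_inter_distrib_right, (Finset.disjoint_iff_inter_eq_empty.mp hUBe)]
            rw [Finset.union_empty]
          · apply Finset.prod_congr rfl
            intro e' he'
            congr 1
            have hdTe' : Disjoint T (B e') := Finset.disjoint_of_subset_left hT
              (hdisj e (Finset.mem_insert_self e K) e' (Finset.mem_insert_of_mem he')
                (fun h => he (h ▸ he')))
            rw [Finset.union_inter_distrib_right,
              Finset.disjoint_iff_inter_eq_empty.mp hdTe', Finset.empty_union]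
        rw [ExA_congr p _ inner, ExA_const_mul]
        congr 1
        exact ih (A \ B e) B g
          (fun e' he' => Finset.subset_sdiff.mpr
            ⟨hsub e' (Finset.mem_insert_of_mem he'),
             hdisj e' (Finset.mem_insert_of_mem he') e (Finset.mem_insert_self e K)
               (fun h => he (h ▸ he'))⟩)
          (fun a ha b hb hab =>
            hdisj a (Finset.mem_insert_of_mem ha) b (Finset.mem_insert_of_mem hb) hab)
      rw [step1, ExA_mul_const, Finset.prod_insert he]

end Stmt10Aux

namespace Stmt10Aux

variable {V : Type*} [DecidableEq V]

/-- Indicator that the pair `D` is inside `S`. -/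
noncomputable def Zin (D S : Finset V) : ℝ := if D ⊆ S then 1 else 0

/-- Indicator that the pair `D` touches `S`. -/
noncomputable def Zt (D S : Finset V) : ℝ := if (D ∩ S).Nonempty then 1 else 0

lemma Zin_inter (D S : Finset V) : Zin D (S ∩ D) = Zin D S := by
  unfold Zin
  congr 1
  simp only [eq_iff_iff, Finset.subset_inter_iff]
  tauto

lemma Zt_inter (D S : Finset V) : Zt D (S ∩ D) = Zt D S := by
  unfold Zt
  congr 1
  rw [Finset.inter_comm S D, ← Finset.inter_assoc, Finset.inter_self]

lemma Zin_nonneg (D S : Finset V) : 0 ≤ Zin D S := by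
  unfold Zin; split <;> norm_num

lemma Zt_nonneg (D S : Finset V) : 0 ≤ Zt D S := by
  unfold Zt; split <;> norm_num

lemma ExA_pair (p : ℝ) {u v : V} (huv : u ≠ v) (g : Finset V → ℝ) :
    ExA p {u, v} g = p^2 * g {u, v} + p*(1-p) * g {u} + (1-p)*p * g {v}
      + (1-p)^2 * g ∅ := by
  have h1 : ({u, v} : Finset V) = insert u {v} := rfl
  have hu : u ∉ ({v} : Finset V) := by simp [huv]
  have hv : v ∉ (∅ : Finset V) := Finset.notMem_empty v
  have h2 : ({v} : Finset V) = insert v ∅ := rfl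
  rw [h1, ExA_insert p hu, h2, ExA_insert p hv, ExA_insert p hv]
  simp only [ExA_empty]
  have e1 : insert u (insert v (∅:Finset V)) = {u, v} := rfl
  have e2 : insert u (∅ : Finset V) = {u} := rfl
  have e3 : insert v (∅ : Finset V) = {v} := rfl
  rw [e1, e2, e3]
  ring

lemma ExA_exp_Zin (p : ℝ) {u v : V} (huv : u ≠ v) (lam : ℝ) :
    ExA p {u, v} (fun T => Real.exp (lam * Zin {u, v} T))
      = 1 + p^2 * (Real.exp lam - 1) := by
  rw [ExA_pair p huv]
  have e1 : Zin {u, v} ({u, v} : Finset V) = 1 := by simp [Zin]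
  have e2 : Zin ({u, v} : Finset V) {u} = 0 := by
    unfold Zin
    rw [if_neg]
    intro h
    exact huv.symm (by simpa using h (by simp : v ∈ ({u, v} : Finset V)))
  have e3 : Zin ({u, v} : Finset V) {v} = 0 := by
    unfold Zin
    rw [if_neg]
    intro h
    exact huv (by simpa using h (by simp : u ∈ ({u, v} : Finset V)))
  have e4 : Zin ({u, v} : Finset V) ∅ = 0 := by
    simp only [Zin, Finset.insert_subset_iff, Finset.notMem_empty, false_and, if_false]
  rw [e1, e2, e3, e4]
  simp only [mul_one, mul_zero, Real.exp_zero]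
  ring

lemma ExA_exp_Zt (p : ℝ) {u v : V} (huv : u ≠ v) (lam : ℝ) :
    ExA p {u, v} (fun T => Real.exp (lam * Zt {u, v} T))
      = 1 + (1 - (1-p)^2) * (Real.exp lam - 1) := by
  rw [ExA_pair p huv]
  have e1 : Zt {u, v} ({u, v} : Finset V) = 1 := by
    simp [Zt, Finset.inter_self, Finset.insert_nonempty]
  have e2 : Zt ({u, v} : Finset V) {u} = 1 := by
    unfold Zt
    rw [if_pos ⟨u, by simp⟩]
  have e3 : Zt ({u, v} : Finset V) {v} = 1 := by
    unfold Zt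
    rw [if_pos ⟨v, by simp⟩]
  have e4 : Zt ({u, v} : Finset V) ∅ = 0 := by
    simp [Zt]
  rw [e1, e2, e3, e4]
  simp only [mul_one, mul_zero, Real.exp_zero]
  ring

end Stmt10Aux

namespace Stmt10Aux

variable {V : Type*} [DecidableEq V]

lemma ExA_exp_sum (p lam : ℝ) (A : Finset V) {ι : Type*} (K : Finset ι) (B : ι → Finset V)
    (hsub : ∀ e ∈ K, B e ⊆ A)
    (hdisj : ∀ a ∈ K, ∀ b ∈ K, a ≠ b → Disjoint (B a) (B b))
    (hpair : ∀ e ∈ K, ∃ u v, u ≠ v ∧ B e = {u, v})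
    (Z : Finset V → Finset V → ℝ) (hZ : ∀ D S, Z D (S ∩ D) = Z D S)
    (val : ℝ)
    (hval : ∀ u v : V, u ≠ v → ExA p {u, v} (fun T => Real.exp (lam * Z {u, v} T)) = val) :
    ExA p A (fun S => Real.exp (lam * ∑ e ∈ K, Z (B e) S)) = val ^ K.card := by
  have step : ExA p A (fun S => Real.exp (lam * ∑ e ∈ K, Z (B e) S))
      = ExA p A (fun S => ∏ e ∈ K, (fun T => Real.exp (lam * Z (B e) T)) (S ∩ B e)) := by
    apply ExA_congr
    intro T _
    rw [Finset.mul_sum, Real.exp_sum]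
    refine Finset.prod_congr rfl fun e _ => ?_
    show Real.exp (lam * Z (B e) T) = Real.exp (lam * Z (B e) (T ∩ B e))
    rw [hZ]
  rw [step, ExA_prod_indep p K A B (fun e T => Real.exp (lam * Z (B e) T)) hsub hdisj]
  rw [← Finset.prod_const]
  apply Finset.prod_congr rfl
  intro e he
  obtain ⟨u, v, huv, hBe⟩ := hpair e he
  rw [hBe]
  rw [ExA_congr p {u, v} (fun T _ => by rw [hZ] :
    ∀ T ⊆ ({u, v} : Finset V), Real.exp (lam * Z {u, v} (T ∩ {u, v})) = Real.exp (lam * Z {u, v} T))]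
  exact hval u v huv

lemma tail_lower (p : ℝ) (hp0 : 0 ≤ p) (hp1 : p ≤ 1) (A : Finset V) {ι : Type*}
    (K : Finset ι) (B : ι → Finset V)
    (hsub : ∀ e ∈ K, B e ⊆ A)
    (hdisj : ∀ a ∈ K, ∀ b ∈ K, a ≠ b → Disjoint (B a) (B b))
    (hpair : ∀ e ∈ K, ∃ u v, u ≠ v ∧ B e = {u, v})
    (a lam : ℝ) (hlam : 0 ≤ lam) :
    ExA p A (fun S => if (∑ e ∈ K, Zin (B e) S) < a then 1 else 0)
      ≤ Real.exp (lam * a) * (1 + p^2 * (Real.exp (-lam) - 1)) ^ K.card := by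
  have key : ExA p A (fun S => Real.exp (lam * a) * Real.exp ((-lam) * ∑ e ∈ K, Zin (B e) S))
      = Real.exp (lam * a) * (1 + p^2 * (Real.exp (-lam) - 1)) ^ K.card := by
    rw [ExA_const_mul]
    congr 1
    exact ExA_exp_sum p (-lam) A K B hsub hdisj hpair Zin Zin_inter _
      (fun u v huv => ExA_exp_Zin p huv (-lam))
  rw [← key]
  apply ExA_mono p hp0 hp1
  intro T _
  split
  · rename_i h
    rw [← Real.exp_add]
    have : (0:ℝ) ≤ lam * a + (-lam) * ∑ e ∈ K, Zin (B e) T := by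
      have := h.le
      nlinarith
    calc (1:ℝ) = Real.exp 0 := Real.exp_zero.symm
    _ ≤ _ := Real.exp_le_exp.mpr this
  · positivity

lemma tail_upper (p : ℝ) (hp0 : 0 ≤ p) (hp1 : p ≤ 1) (A : Finset V) {ι : Type*}
    (K : Finset ι) (B : ι → Finset V)
    (hsub : ∀ e ∈ K, B e ⊆ A)
    (hdisj : ∀ a ∈ K, ∀ b ∈ K, a ≠ b → Disjoint (B a) (B b))
    (hpair : ∀ e ∈ K, ∃ u v, u ≠ v ∧ B e = {u, v})
    (L lam : ℝ) (hlam : 0 ≤ lam) :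
    ExA p A (fun S => if L < (∑ e ∈ K, Zt (B e) S) then 1 else 0)
      ≤ Real.exp (-(lam * L)) * (1 + (1 - (1-p)^2) * (Real.exp lam - 1)) ^ K.card := by
  have key : ExA p A (fun S => Real.exp (-(lam * L)) * Real.exp (lam * ∑ e ∈ K, Zt (B e) S))
      = Real.exp (-(lam * L)) * (1 + (1 - (1-p)^2) * (Real.exp lam - 1)) ^ K.card := by
    rw [ExA_const_mul]
    congr 1
    exact ExA_exp_sum p lam A K B hsub hdisj hpair Zt Zt_inter _
      (fun u v huv => ExA_exp_Zt p huv lam)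
  rw [← key]
  apply ExA_mono p hp0 hp1
  intro T _
  split
  · rename_i h
    rw [← Real.exp_add]
    have : (0:ℝ) ≤ -(lam * L) + lam * ∑ e ∈ K, Zt (B e) T := by
      have := h.le
      nlinarith
    calc (1:ℝ) = Real.exp 0 := Real.exp_zero.symm
    _ ≤ _ := Real.exp_le_exp.mpr this
  · positivity

end Stmt10Aux


namespace Stmt10Aux

lemma exp_neg_le_quad {lam : ℝ} (h0 : 0 ≤ lam) :
    Real.exp (-lam) ≤ 1 - lam + lam^2 := by
  have h1 : (0:ℝ) < 1 + lam := by linarith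
  have h2 : 1 + lam ≤ Real.exp lam := by
    have := Real.add_one_le_exp lam; linarith
  have h3 : Real.exp (-lam) = 1 / Real.exp lam := by
    rw [Real.exp_neg]; ring
  rw [h3]
  have h4 : 1 / Real.exp lam ≤ 1 / (1 + lam) := by
    apply one_div_le_one_div_of_le h1 h2
  refine h4.trans ?_
  rw [div_le_iff₀ h1]
  nlinarith
  
lemma exp_le_quad {lam : ℝ} (h0 : 0 ≤ lam) (h1 : lam ≤ 1/2) :
    Real.exp lam ≤ 1 + lam + 2*lam^2 := by
  have h2 : (0:ℝ) < 1 - lam := by linarith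
  have h3 : 1 - lam ≤ Real.exp (-lam) := by
    have := Real.add_one_le_exp (-lam); linarith
  have h4 : Real.exp lam = 1 / Real.exp (-lam) := by
    rw [Real.exp_neg]; simp
  rw [h4]
  have h5 : 1 / Real.exp (-lam) ≤ 1 / (1 - lam) := by
    apply one_div_le_one_div_of_le h2 h3
  refine h5.trans ?_
  rw [div_le_iff₀ h2]
  nlinarith

lemma bound_lower (x : ℝ) (k : ℕ) (hx : 10^4 ≤ x) (hs : x^16 ≤ (k:ℝ)) :
    Real.exp ((1/x) * (41*x^14)) * (1 + (7/x)^2 * (Real.exp (-(1/x)) - 1)) ^ k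
      ≤ Real.exp (-(7*x^13)) := by
  have hx0 : (0:ℝ) < x := by linarith
  have hxi0 : (0:ℝ) < 1/x := by positivity
  have hC : (7/x)^2 * (Real.exp (-(1/x)) - 1) ≤ -(48/x^3) := by
    have h1 : Real.exp (-(1/x)) ≤ 1 - 1/x + (1/x)^2 := exp_neg_le_quad hxi0.le
    have h2 : (7/x)^2 * (Real.exp (-(1/x)) - 1) ≤ (49/x^2) * (-(1/x) + (1/x)^2) := by
      have : Real.exp (-(1/x)) - 1 ≤ -(1/x) + (1/x)^2 := by linarith
      have hp : (7/x)^2 = 49/x^2 := by field_simp; ring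
      rw [hp]
      apply mul_le_mul_of_nonneg_left this (by positivity)
    refine h2.trans ?_
    have e1 : 49/x^2 * (-(1/x) + (1/x)^2) = (49 - 49*x)/x^4 := by field_simp; ring
    have e2 : -(48/x^3) = (-48*x)/x^4 := by field_simp
    rw [e1, e2, div_le_div_iff₀ (by positivity) (by positivity)]
    nlinarith [pow_pos hx0 4]
  have hC1 : (0:ℝ) ≤ 1 + (7/x)^2 * (Real.exp (-(1/x)) - 1) := by
    have h3 : Real.exp (-(1/x)) - 1 ≥ -1 := by
      have := Real.exp_pos (-(1/x)); linarith
    have h4 : (7/x)^2 ≤ 1 := by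
      rw [div_pow, div_le_one (by positivity)]
      nlinarith
    nlinarith [sq_nonneg (7/x)]
  have hpow : (1 + (7/x)^2 * (Real.exp (-(1/x)) - 1)) ^ k
      ≤ Real.exp ((k:ℝ) * (-(48/x^3))) := by
    calc (1 + (7/x)^2 * (Real.exp (-(1/x)) - 1)) ^ k
        ≤ (Real.exp (-(48/x^3))) ^ k := by
          apply pow_le_pow_left₀ hC1
          calc 1 + (7/x)^2 * (Real.exp (-(1/x)) - 1) ≤ 1 + -(48/x^3) := by linarith
          _ ≤ Real.exp (-(48/x^3)) := by have := Real.add_one_le_exp (-(48/x^3)); linarith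
    _ = Real.exp ((k:ℝ) * (-(48/x^3))) := by rw [← Real.exp_nat_mul]
  calc Real.exp ((1/x) * (41*x^14)) * (1 + (7/x)^2 * (Real.exp (-(1/x)) - 1)) ^ k
      ≤ Real.exp ((1/x) * (41*x^14)) * Real.exp ((k:ℝ) * (-(48/x^3))) := by
        apply mul_le_mul_of_nonneg_left hpow (Real.exp_pos _).le
  _ = Real.exp ((1/x) * (41*x^14) + (k:ℝ) * (-(48/x^3))) := (Real.exp_add _ _).symm
  _ ≤ Real.exp (-(7*x^13)) := by
      apply Real.exp_le_exp.mpr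
      have h5 : (1/x) * (41*x^14) = 41*x^13 := by field_simp
      have h6 : (k:ℝ) * (-(48/x^3)) ≤ x^16 * (-(48/x^3)) := by
        apply mul_le_mul_of_nonpos_right hs
        have : (0:ℝ) ≤ 48/x^3 := by positivity
        linarith
      have h7 : x^16 * (-(48/x^3)) = -(48*x^13) := by field_simp
      rw [h5]
      nlinarith [pow_pos hx0 13]

end Stmt10Aux

namespace Stmt10Aux

lemma bound_upper (x : ℝ) (k : ℕ) (hx : 10^4 ≤ x) (hs : x^16 + 20*x^15 ≤ (k:ℝ)) :
    Real.exp (-((1/x) * ((k:ℝ) - x^16 - 20*x^14)))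
      * (1 + (1 - (1 - 7/x)^2) * (Real.exp (1/x) - 1)) ^ k
      ≤ Real.exp (-(5*x^14)) := by
  have hx0 : (0:ℝ) < x := by linarith
  have hqt1 : 1 - (1 - 7/x)^2 ≤ 14/x := by
    have h : 1 - (1 - 7/x)^2 = 14/x - (7/x)^2 := by ring
    rw [h]
    nlinarith [sq_nonneg (7/x)]
  have hexp1 : Real.exp (1/x) - 1 ≤ 1/x + 2*(1/x)^2 := by
    have := exp_le_quad (le_of_lt (by positivity : (0:ℝ) < 1/x))
      (by rw [div_le_div_iff₀ hx0 (by norm_num)]; linarith : 1/x ≤ 1/2)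
    linarith
  have hexp0 : (0:ℝ) ≤ Real.exp (1/x) - 1 := by
    have := Real.add_one_le_exp (1/x)
    have h0 : (0:ℝ) < 1/x := by positivity
    linarith
  have hqt0 : (0:ℝ) ≤ 1 - (1 - 7/x)^2 := by
    have h7 : 7/x ≤ 1 := by rw [div_le_one hx0]; linarith
    have h70 : (0:ℝ) ≤ 7/x := by positivity
    nlinarith
  have hcc : (1 - (1 - 7/x)^2) * (Real.exp (1/x) - 1) ≤ 14/x^2 + 28/x^3 := by
    calc (1 - (1 - 7/x)^2) * (Real.exp (1/x) - 1) ≤ (14/x) * (1/x + 2*(1/x)^2) :=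
          mul_le_mul hqt1 hexp1 hexp0 (by positivity)
    _ = 14/x^2 + 28/x^3 := by field_simp; ring
  have hcf0 : (0:ℝ) ≤ 1 + (1 - (1 - 7/x)^2) * (Real.exp (1/x) - 1) := by
    linarith [mul_nonneg hqt0 hexp0]
  have hpow : (1 + (1 - (1 - 7/x)^2) * (Real.exp (1/x) - 1)) ^ k
      ≤ Real.exp ((k:ℝ) * (14/x^2 + 28/x^3)) := by
    calc (1 + (1 - (1 - 7/x)^2) * (Real.exp (1/x) - 1)) ^ k
        ≤ (Real.exp (14/x^2 + 28/x^3)) ^ k := by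
          apply pow_le_pow_left₀ hcf0
          have := Real.add_one_le_exp (14/x^2 + 28/x^3)
          linarith
    _ = Real.exp ((k:ℝ) * (14/x^2 + 28/x^3)) := by rw [← Real.exp_nat_mul]
  calc Real.exp (-((1/x) * ((k:ℝ) - x^16 - 20*x^14)))
      * (1 + (1 - (1 - 7/x)^2) * (Real.exp (1/x) - 1)) ^ k
      ≤ Real.exp (-((1/x) * ((k:ℝ) - x^16 - 20*x^14)))
          * Real.exp ((k:ℝ) * (14/x^2 + 28/x^3)) := by
        apply mul_le_mul_of_nonneg_left hpow (Real.exp_pos _).le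
  _ = Real.exp (-((1/x) * ((k:ℝ) - x^16 - 20*x^14)) + (k:ℝ) * (14/x^2 + 28/x^3)) :=
        (Real.exp_add _ _).symm
  _ ≤ Real.exp (-(5*x^14)) := by
      apply Real.exp_le_exp.mpr
      set s : ℝ := (k:ℝ) with hsdef
      have hx3 : (0:ℝ) < x^3 := by positivity
      have key : (-((1/x) * (s - x^16 - 20*x^14)) + s * (14/x^2 + 28/x^3)) * x^3
          ≤ (-(5*x^14)) * x^3 := by
        have e : (-((1/x) * (s - x^16 - 20*x^14)) + s * (14/x^2 + 28/x^3)) * x^3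
            = -(s*x^2) + x^18 + 20*x^16 + 14*s*x + 28*s := by
          field_simp; ring
        rw [e]
        have hr : (0:ℝ) ≤ s - x^16 - 20*x^15 := by linarith
        have h2 : (0:ℝ) ≤ x^2 - 14*x - 28 := by nlinarith
        have h3 : (0:ℝ) ≤ (s - x^16 - 20*x^15) * (x^2 - 14*x - 28) := mul_nonneg hr h2
        have h4 : (0:ℝ) < x^15 := by positivity
        have h5 : (0:ℝ) < x^16 := by positivity
        have hbig : 328*x^16 + 560*x^15 ≤ x^17 := by
          have e16 : x^17 = x * x^16 := by ring
          nlinarith [mul_le_mul_of_nonneg_right hx h5.le]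
        have e5 : (-(5*x^14)) * x^3 = -(5*x^17) := by ring
        rw [e5]
        nlinarith
      exact le_of_mul_le_mul_right key hx3

lemma final_small (x : ℝ) (n : ℕ) (hx : 10^4 ≤ x) (hn : (n:ℝ) = x^16) :
    (n:ℝ) * Real.exp (-(7*x^13)) + (n:ℝ) * Real.exp (-(5*x^14)) < 1 := by
  have hx0 : (0:ℝ) < x := by linarith
  have h1 : Real.exp (-(5*x^14)) ≤ Real.exp (-(7*x^13)) := by
    apply Real.exp_le_exp.mpr
    have : 7*x^13 ≤ 5*x^14 := by nlinarith [pow_pos hx0 13]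
    linarith
  have h2 : (n:ℝ) * Real.exp (-(7*x^13)) < 1/2 := by
    rw [hn]
    have hz : (0:ℝ) ≤ 7*x^13/2 := by positivity
    have hee : Real.exp (7*x^13) = Real.exp (7*x^13/2) * Real.exp (7*x^13/2) := by
      rw [← Real.exp_add]; ring_nf
    have hb : (1 + 7*x^13/2) * (1 + 7*x^13/2) ≤ Real.exp (7*x^13) := by
      rw [hee]
      have ha := Real.add_one_le_exp (7*x^13/2)
      have hp : (0:ℝ) ≤ 1 + 7*x^13/2 := by positivity
      nlinarith [Real.exp_pos (7*x^13/2)]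
    have hgt : 2*x^16 < (1 + 7*x^13/2) * (1 + 7*x^13/2) := by
      have h16 : x^16 ≤ x^26 := by
        apply pow_le_pow_right₀ (by linarith : (1:ℝ) ≤ x) (by norm_num)
      nlinarith [pow_pos hx0 13, pow_pos hx0 16, pow_pos hx0 26]
    have hlt : 2*x^16 < Real.exp (7*x^13) := lt_of_lt_of_le hgt hb
    rw [Real.exp_neg]
    rw [mul_inv_lt_iff₀ (Real.exp_pos _)]
    linarith
  have h3 : (n:ℝ) * Real.exp (-(5*x^14)) < 1/2 := by
    have hnn : (0:ℝ) ≤ (n:ℝ) := Nat.cast_nonneg n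
    calc (n:ℝ) * Real.exp (-(5*x^14)) ≤ (n:ℝ) * Real.exp (-(7*x^13)) :=
          mul_le_mul_of_nonneg_left h1 hnn
    _ < 1/2 := h2
  linarith

end Stmt10Aux

namespace Stmt10Aux

variable {V E : Type*} [DecidableEq V]

/-- In a matching, the number of edges meeting a vertex set `W` is at most `W.card`. -/
lemma card_meet_le (e₁ e₂ : E → V) (K : Finset E)
    (hdisj : ∀ a ∈ K, ∀ b ∈ K, a ≠ b → Disjoint (edgeEnds e₁ e₂ a) (edgeEnds e₁ e₂ b))
    (W : Finset V) :
    (K.filter (fun e => (edgeEnds e₁ e₂ e ∩ W).Nonempty)).card ≤ W.card := by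
  set B := K.filter (fun e => (edgeEnds e₁ e₂ e ∩ W).Nonempty) with hB
  have h1 : B.card ≤ (B.biUnion (fun e => edgeEnds e₁ e₂ e ∩ W)).card := by
    apply card_le_card_biUnion
    · intro a ha b hb hab
      have haB : a ∈ B := by exact_mod_cast ha
      have hbB : b ∈ B := by exact_mod_cast hb
      have haK : a ∈ K := Finset.mem_of_mem_filter a haB
      have hbK : b ∈ K := Finset.mem_of_mem_filter b hbB
      exact Finset.disjoint_of_subset_left Finset.inter_subset_left
        (Finset.disjoint_of_subset_right Finset.inter_subset_left (hdisj a haK b hbK hab))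
    · intro e he
      exact (Finset.mem_filter.mp he).2
  refine h1.trans (Finset.card_le_card ?_)
  intro v hv
  obtain ⟨e, _, hv2⟩ := Finset.mem_biUnion.mp hv
  exact (Finset.mem_inter.mp hv2).2

/-- Greedy completion of a partial rainbow matching inside `S`. -/
lemma greedy {n : ℕ} [Fintype V] [Fintype E] (e₁ e₂ : E → V) (col : E → Fin n)
    (S : Finset V) (M₀ : Finset E) (x : ℝ)
    (hM₀m : IsMatchingE e₁ e₂ M₀) (hM₀rb : IsRainbow col M₀)
    (hM₀S : ∀ e ∈ M₀, edgeEnds e₁ e₂ e ∩ S = ∅)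
    (hmiss : (((univ : Finset (Fin n)) \ M₀.image col).card : ℝ) ≤ 20*x^14)
    (hclm : ∀ c : Fin n, IsMatchingE e₁ e₂ (colourClass col c))
    (hin : ∀ c : Fin n,
      41*x^14 ≤ (((colourClass col c).filter (fun e => edgeEnds e₁ e₂ e ⊆ S)).card : ℝ)) :
    ∀ D : Finset (Fin n), D ⊆ (univ : Finset (Fin n)) \ M₀.image col →
    ∃ M : Finset E, M₀ ⊆ M ∧ IsMatchingE e₁ e₂ M ∧ IsRainbow col M ∧
      M.image col = M₀.image col ∪ D ∧ (∀ e ∈ M, e ∉ M₀ → edgeEnds e₁ e₂ e ⊆ S) := by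
  intro D
  induction D using Finset.induction with
  | empty =>
      intro _
      exact ⟨M₀, Finset.Subset.refl M₀, hM₀m, hM₀rb, by simp, fun e he hne => absurd he hne⟩
  | @insert c D hc ih =>
      intro hsub
      obtain ⟨M, hM₀M, hMm, hMrb, hMim, hMS⟩ := ih
        (Finset.Subset.trans (Finset.subset_insert c D) hsub)
      -- cardinality of D
      have hcmiss : c ∈ (univ : Finset (Fin n)) \ M₀.image col :=
        hsub (Finset.mem_insert_self c D)
      have hcim : c ∉ M₀.image col := (Finset.mem_sdiff.mp hcmiss).2
      have hDcard : (D.card : ℝ) ≤ 20*x^14 - 1 := by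
        have h1 : (insert c D).card ≤ ((univ : Finset (Fin n)) \ M₀.image col).card :=
          Finset.card_le_card hsub
        have h2 : (insert c D).card = D.card + 1 := Finset.card_insert_of_notMem hc
        have : (D.card : ℝ) + 1 ≤ 20*x^14 := by
          calc ((D.card : ℝ) + 1) = ((insert c D).card : ℝ) := by rw [h2]; push_cast; ring
          _ ≤ _ := by exact_mod_cast le_trans (Nat.cast_le.mpr h1) hmiss
        linarith
      -- |M \ M₀| = |D|
      have hDdisj : Disjoint (M₀.image col) D := by
        have : D ⊆ (univ : Finset (Fin n)) \ M₀.image col :=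
          Finset.Subset.trans (Finset.subset_insert c D) hsub
        exact Finset.disjoint_left.mpr fun a ha hD =>
          (Finset.mem_sdiff.mp (this hD)).2 ha
      have hMcard : M.card = M₀.card + D.card := by
        have h1 : M.card = (M.image col).card :=
          (Finset.card_image_of_injOn hMrb).symm
        have h2 : (M₀.image col ∪ D).card = (M₀.image col).card + D.card :=
          Finset.card_union_of_disjoint hDdisj
        have h3 : (M₀.image col).card = M₀.card := Finset.card_image_of_injOn hM₀rb
        rw [h1, hMim, h2, h3]
      have hsdcard : (M \ M₀).card = D.card := by
        rw [Finset.card_sdiff_of_subset hM₀M, hMcard]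
        omega
      -- blocked vertices
      set W := matchedVerts e₁ e₂ (M \ M₀) with hW
      have hWcard : (W.card : ℝ) ≤ 40*x^14 - 2 := by
        have h1 : W.card ≤ ∑ e ∈ M \ M₀, (edgeEnds e₁ e₂ e).card :=
          Finset.card_biUnion_le
        have h2 : ∑ e ∈ M \ M₀, (edgeEnds e₁ e₂ e).card ≤ (M \ M₀).card * 2 := by
          calc ∑ e ∈ M \ M₀, (edgeEnds e₁ e₂ e).card ≤ ∑ _e ∈ M \ M₀, 2 :=
                Finset.sum_le_sum (fun e _ => by
                  calc (edgeEnds e₁ e₂ e).card ≤ ({e₂ e} : Finset V).card + 1 :=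
                        Finset.card_insert_le _ _
                  _ = 2 := by simp)
          _ = (M \ M₀).card * 2 := by rw [Finset.sum_const, smul_eq_mul]
        have h3 : (W.card : ℝ) ≤ 2 * ((M \ M₀).card : ℝ) := by
          have := h1.trans h2
          exact_mod_cast le_trans (Nat.cast_le.mpr this) (by push_cast; linarith)
        rw [hsdcard] at h3
        linarith
      -- pick an unblocked edge of colour c inside S
      set Kin := (colourClass col c).filter (fun e => edgeEnds e₁ e₂ e ⊆ S) with hKin
      have hblock : ((Kin.filter (fun e => (edgeEnds e₁ e₂ e ∩ W).Nonempty)).card : ℝ)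
          ≤ (W.card : ℝ) := by
        exact_mod_cast card_meet_le e₁ e₂ Kin
          (fun a ha b hb hab => (hclm c).2 a (Finset.mem_of_mem_filter a ha)
            b (Finset.mem_of_mem_filter b hb) hab) W
      have hrest : (Kin.filter (fun e => ¬(edgeEnds e₁ e₂ e ∩ W).Nonempty)).Nonempty := by
        rw [← Finset.card_pos]
        by_contra hcon
        push_neg at hcon
        have h0 : (Kin.filter (fun e => ¬(edgeEnds e₁ e₂ e ∩ W).Nonempty)).card = 0 :=
          Nat.le_zero.mp (by simpa only [Finset.not_nonempty_iff_eq_empty] using hcon)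
        have hpart := Finset.card_filter_add_card_filter_not
          (s := Kin) (p := fun e => (edgeEnds e₁ e₂ e ∩ W).Nonempty)
        have hlt : (Kin.card : ℝ) ≤ 40*x^14 - 2 := by
          rw [← hpart, h0]
          push_cast
          linarith
        have := hin c
        rw [← hKin] at this
        linarith
      obtain ⟨e, he⟩ := hrest
      have heKin : e ∈ Kin := Finset.mem_of_mem_filter e he
      have heW : edgeEnds e₁ e₂ e ∩ W = ∅ :=
        Finset.not_nonempty_iff_eq_empty.mp (Finset.mem_filter.mp he).2
      have heS : edgeEnds e₁ e₂ e ⊆ S := (Finset.mem_filter.mp heKin).2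
      have hecc : e ∈ colourClass col c := Finset.mem_of_mem_filter e heKin
      have hecol : col e = c := by
        have h := hecc
        simp only [colourClass, Finset.mem_filter] at h
        exact h.2
      have he1ends : e₁ e ∈ edgeEnds e₁ e₂ e := Finset.mem_insert_self _ _
      -- e is new
      have henM : e ∉ M := by
        intro heM
        by_cases heM₀ : e ∈ M₀
        · have h1 : e₁ e ∈ S := heS he1ends
          have h2 : e₁ e ∈ edgeEnds e₁ e₂ e ∩ S := Finset.mem_inter.mpr ⟨he1ends, h1⟩
          rw [hM₀S e heM₀] at h2
          exact absurd h2 (Finset.notMem_empty _)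
        · have h1 : e₁ e ∈ W := by
            rw [hW]
            exact Finset.mem_biUnion.mpr ⟨e, Finset.mem_sdiff.mpr ⟨heM, heM₀⟩, he1ends⟩
          have h2 : e₁ e ∈ edgeEnds e₁ e₂ e ∩ W := Finset.mem_inter.mpr ⟨he1ends, h1⟩
          rw [heW] at h2
          exact absurd h2 (Finset.notMem_empty _)
      -- disjointness of e from edges of M
      have hedisj : ∀ b ∈ M, Disjoint (edgeEnds e₁ e₂ e) (edgeEnds e₁ e₂ b) := by
        intro b hb
        by_cases hbM₀ : b ∈ M₀
        · rw [Finset.disjoint_left]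
          intro v hv hvb
          have h1 : v ∈ S := heS hv
          have h2 : v ∈ edgeEnds e₁ e₂ b ∩ S := Finset.mem_inter.mpr ⟨hvb, h1⟩
          rw [hM₀S b hbM₀] at h2
          exact absurd h2 (Finset.notMem_empty _)
        · rw [Finset.disjoint_left]
          intro v hv hvb
          have h1 : v ∈ W := by
            rw [hW]
            exact Finset.mem_biUnion.mpr ⟨b, Finset.mem_sdiff.mpr ⟨hb, hbM₀⟩, hvb⟩
          have h2 : v ∈ edgeEnds e₁ e₂ e ∩ W := Finset.mem_inter.mpr ⟨hv, h1⟩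
          rw [heW] at h2
          exact absurd h2 (Finset.notMem_empty _)
      -- c is a new colour for M
      have hcnotM : c ∉ M.image col := by
        rw [hMim]
        intro hcm
        rcases Finset.mem_union.mp hcm with h | h
        · exact hcim h
        · exact hc h
      refine ⟨insert e M, Finset.Subset.trans hM₀M (Finset.subset_insert e M), ?_, ?_, ?_, ?_⟩
      · constructor
        · intro f hf
          rcases Finset.mem_insert.mp hf with h | hfM
          · exact h ▸ (hclm c).1 e hecc
          · exact hMm.1 f hfM
        · intro a ha b hb hab
          rcases Finset.mem_insert.mp ha with h1 | haM
          · rcases Finset.mem_insert.mp hb with h2 | hbM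
            · exact absurd (h1.trans h2.symm) hab
            · exact h1 ▸ hedisj b hbM
          · rcases Finset.mem_insert.mp hb with h2 | hbM
            · exact h2 ▸ (hedisj a haM).symm
            · exact hMm.2 a haM b hbM hab
      · intro a ha b hb hab
        rw [Finset.coe_insert, Set.mem_insert_iff] at ha hb
        rcases ha with h1 | haM
        · rcases hb with h2 | hbM
          · rw [h1, h2]
          · exfalso
            apply hcnotM
            rw [← hecol, ← h1, hab]
            exact Finset.mem_image_of_mem col hbM
        · rcases hb with h2 | hbM
          · exfalso
            apply hcnotM
            rw [← hecol, ← h2, ← hab]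
            exact Finset.mem_image_of_mem col haM
          · exact hMrb haM hbM hab
      · rw [Finset.image_insert, hMim, hecol, Finset.union_insert]
      · intro f hf hfM₀
        rcases Finset.mem_insert.mp hf with h | hfM
        · exact h ▸ heS
        · exact hMS f hfM hfM₀

end Stmt10Aux


namespace Stmt10Aux

set_option linter.unusedSectionVars false

/-- Union bound / first-moment existence. -/
lemma exists_good {V : Type*} [DecidableEq V] (p : ℝ) (hp0 : 0 ≤ p) (hp1 : p ≤ 1)
    (A : Finset V) {ι : Type*} (s : Finset ι) (f : ι → Finset V → ℝ)
    (hnn : ∀ i ∈ s, ∀ T ⊆ A, 0 ≤ f i T)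
    (hsum : ∑ i ∈ s, ExA p A (f i) < 1) :
    ∃ T ⊆ A, ∀ i ∈ s, f i T < 1 := by
  by_contra hcon
  push_neg at hcon
  have h1 : ∀ T ⊆ A, (1:ℝ) ≤ ∑ i ∈ s, f i T := by
    intro T hT
    obtain ⟨i, hi, h1i⟩ := hcon T hT
    calc (1:ℝ) ≤ f i T := h1i
    _ ≤ ∑ i ∈ s, f i T := Finset.single_le_sum (fun j hj => hnn j hj T hT) hi
  have h2 : (1:ℝ) ≤ ExA p A (fun T => ∑ i ∈ s, f i T) := by
    have h3 := ExA_mono p hp0 hp1 A (f := fun _ => (1:ℝ))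
      (g := fun T => ∑ i ∈ s, f i T) h1
    rw [ExA_const] at h3
    exact h3
  rw [ExA_sum] at h2
  linarith

lemma sum_indicator_eq_card {E : Type*} (s : Finset E) (q : E → Prop) [DecidablePred q] :
    (∑ e ∈ s, (if q e then (1:ℝ) else 0)) = ((s.filter q).card : ℝ) := by
  rw [Finset.card_filter]
  push_cast
  apply Finset.sum_congr rfl
  intro e _
  split <;> simp

lemma Zin_eq {V : Type*} [DecidableEq V] (D S : Finset V) {hd : Decidable (D ⊆ S)} :
    Zin D S = @ite ℝ (D ⊆ S) hd 1 0 := by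
  unfold Zin
  by_cases h : D ⊆ S
  · rw [if_pos h, if_pos h]
  · rw [if_neg h, if_neg h]

lemma Zt_eq {V : Type*} [DecidableEq V] (D S : Finset V) {hd : Decidable (D ∩ S).Nonempty} :
    Zt D S = @ite ℝ (D ∩ S).Nonempty hd 1 0 := by
  unfold Zt
  by_cases h : (D ∩ S).Nonempty
  · rw [if_pos h, if_pos h]
  · rw [if_neg h, if_neg h]

lemma rpow_pow_eq (n : ℕ) (k : ℕ) :
    ((n:ℝ) ^ ((1:ℝ)/16)) ^ (k:ℕ) = (n:ℝ) ^ ((k:ℝ)/16) := by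
  rw [← Real.rpow_natCast ((n:ℝ) ^ ((1:ℝ)/16)) k, ← Real.rpow_mul (Nat.cast_nonneg n)]
  congr 1
  ring

end Stmt10Aux

open Stmt10Aux

/-- Theorem 5 from Theorem 8 via the sampling trick: assuming every
`m`-edge-coloured multigraph whose colour classes are matchings of size at least
`m + 20 m^{7/8}` has a rainbow matching of size at least `m - 20 m^{7/8}`, every
sufficiently large `n`-edge-coloured multigraph whose colour classes are matchings
of size at least `n + 20 n^{15/16}` has a full rainbow matching using all colours. -/
theorem stmt_10
    (bb : ∀ (m : ℕ) (V' E' : Type) [Fintype V'] [DecidableEq V'] [Fintype E'],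
      ∀ (f₁ f₂ : E' → V') (col' : E' → Fin m),
        (∀ c : Fin m, IsMatchingE f₁ f₂ (colourClass col' c) ∧
          (m : ℝ) + 20 * (m : ℝ) ^ ((7 : ℝ) / 8) ≤ (colourClass col' c).card) →
        ∃ M : Finset E', IsMatchingE f₁ f₂ M ∧ IsRainbow col' M ∧
          (m : ℝ) - 20 * (m : ℝ) ^ ((7 : ℝ) / 8) ≤ M.card) :
    ∃ n₀ : ℕ, ∀ n : ℕ, n₀ ≤ n →
      ∀ (V E : Type) [Fintype V] [DecidableEq V] [Fintype E],
        ∀ (e₁ e₂ : E → V) (col : E → Fin n),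
          (∀ c : Fin n, IsMatchingE e₁ e₂ (colourClass col c) ∧
            (n : ℝ) + 20 * (n : ℝ) ^ ((15 : ℝ) / 16) ≤ (colourClass col c).card) →
          ∃ M : Finset E, IsMatchingE e₁ e₂ M ∧ IsRainbow col M ∧
            ∀ c : Fin n, ∃ e ∈ M, col e = c := by
  refine ⟨10^64, ?_⟩
  intro n hn V E _ _ _ e₁ e₂ col hcl
  -- the scaling parameter x = n^{1/16}
  set x : ℝ := (n:ℝ) ^ ((1:ℝ)/16) with hxdef
  have hn0 : (0:ℝ) ≤ (n:ℝ) := Nat.cast_nonneg n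
  have hx16 : x ^ (16:ℕ) = (n:ℝ) := by
    rw [hxdef, rpow_pow_eq]
    norm_num
  have hx15 : x ^ (15:ℕ) = (n:ℝ) ^ ((15:ℝ)/16) := by
    rw [hxdef, rpow_pow_eq]
    norm_num
  have hx14 : x ^ (14:ℕ) = (n:ℝ) ^ ((7:ℝ)/8) := by
    rw [hxdef, rpow_pow_eq]
    norm_num
  have hx : 10^4 ≤ x := by
    have h1 : ((10:ℝ)^64) ≤ (n:ℝ) := by
      exact_mod_cast hn
    have h2 : ((10:ℝ)^64) ^ ((1:ℝ)/16) ≤ x := by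
      rw [hxdef]
      exact Real.rpow_le_rpow (by positivity) h1 (by norm_num)
    have h3 : ((10:ℝ)^64) ^ ((1:ℝ)/16) = 10^4 := by
      rw [show ((10:ℝ)^64) = ((10:ℝ)^4)^(16:ℕ) by norm_num]
      rw [← Real.rpow_natCast ((10:ℝ)^4) 16, ← Real.rpow_mul (by positivity)]
      norm_num
    linarith
  have hx0 : (0:ℝ) < x := by linarith
  have hp0 : (0:ℝ) ≤ 7/x := by positivity
  have hp1 : 7/x ≤ 1 := by
    rw [div_le_one hx0]
    linarith
  have hlam0 : (0:ℝ) ≤ 1/x := by positivity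
  -- colour class data
  have hclassM : ∀ c : Fin n, IsMatchingE e₁ e₂ (colourClass col c) := fun c => (hcl c).1
  have hclassCard : ∀ c : Fin n, x^16 + 20*x^15 ≤ ((colourClass col c).card : ℝ) := by
    intro c
    rw [hx16, hx15]
    exact (hcl c).2
  have hsubU : ∀ c : Fin n, ∀ e ∈ colourClass col c, edgeEnds e₁ e₂ e ⊆ (univ : Finset V) :=
    fun c e _ => Finset.subset_univ _
  have hpair : ∀ c : Fin n, ∀ e ∈ colourClass col c,
      ∃ u v : V, u ≠ v ∧ edgeEnds e₁ e₂ e = {u, v} :=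
    fun c e he => ⟨e₁ e, e₂ e, (hclassM c).1 e he, rfl⟩
  -- bad-event indicator functions
  set bad1 : Fin n → Finset V → ℝ := fun c S =>
    if (∑ e ∈ colourClass col c, Zin (edgeEnds e₁ e₂ e) S) < 41*x^14 then 1 else 0
    with hbad1def
  set bad2 : Fin n → Finset V → ℝ := fun c S =>
    if (((colourClass col c).card : ℝ) - x^16 - 20*x^14
          < ∑ e ∈ colourClass col c, Zt (edgeEnds e₁ e₂ e) S) then 1 else 0
    with hbad2def
  set f : Fin n × Bool → Finset V → ℝ := fun ci S =>
    if ci.2 then bad1 ci.1 S else bad2 ci.1 S with hfdef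
  have hft : ∀ c : Fin n, f (c, true) = bad1 c := fun c => rfl
  have hff : ∀ c : Fin n, f (c, false) = bad2 c := fun c => rfl
  have hnn : ∀ ci ∈ (univ : Finset (Fin n × Bool)), ∀ T ⊆ (univ : Finset V), 0 ≤ f ci T := by
    intro ci _ T _
    rw [hfdef]
    dsimp only
    split
    · rw [hbad1def]; dsimp only; split <;> norm_num
    · rw [hbad2def]; dsimp only; split <;> norm_num
  -- expectation bounds for the two bad events
  have hb1 : ∀ c : Fin n, ExA (7/x) (univ : Finset V) (f (c, true))
      ≤ Real.exp (-(7*x^13)) := by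
    intro c
    have ht := tail_lower (7/x) hp0 hp1 (univ : Finset V) (colourClass col c)
      (fun e => edgeEnds e₁ e₂ e) (hsubU c) (hclassM c).2 (hpair c)
      (41*x^14) (1/x) hlam0
    have hkn : x^16 ≤ ((colourClass col c).card : ℝ) := by
      have h15 : (0:ℝ) ≤ 20*x^15 := by positivity
      linarith [hclassCard c]
    have hbl := bound_lower x (colourClass col c).card hx hkn
    calc ExA (7/x) (univ : Finset V) (f (c, true))
        = ExA (7/x) (univ : Finset V) (fun S =>
            if (∑ e ∈ colourClass col c, Zin (edgeEnds e₁ e₂ e) S) < 41*x^14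
            then 1 else 0) := by rw [hft c, hbad1def]
    _ ≤ Real.exp ((1/x) * (41*x^14))
          * (1 + (7/x)^2 * (Real.exp (-(1/x)) - 1)) ^ (colourClass col c).card := ht
    _ ≤ Real.exp (-(7*x^13)) := hbl
  have hb2 : ∀ c : Fin n, ExA (7/x) (univ : Finset V) (f (c, false))
      ≤ Real.exp (-(5*x^14)) := by
    intro c
    have ht := tail_upper (7/x) hp0 hp1 (univ : Finset V) (colourClass col c)
      (fun e => edgeEnds e₁ e₂ e) (hsubU c) (hclassM c).2 (hpair c)
      (((colourClass col c).card : ℝ) - x^16 - 20*x^14) (1/x) hlam0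
    have hbu := bound_upper x (colourClass col c).card hx (hclassCard c)
    calc ExA (7/x) (univ : Finset V) (f (c, false))
        = ExA (7/x) (univ : Finset V) (fun S =>
            if (((colourClass col c).card : ℝ) - x^16 - 20*x^14
              < ∑ e ∈ colourClass col c, Zt (edgeEnds e₁ e₂ e) S) then 1 else 0) := by
          rw [hff c, hbad2def]
    _ ≤ Real.exp (-((1/x) * (((colourClass col c).card : ℝ) - x^16 - 20*x^14)))
          * (1 + (1 - (1 - 7/x)^2) * (Real.exp (1/x) - 1)) ^ (colourClass col c).card := ht
    _ ≤ Real.exp (-(5*x^14)) := hbu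
  -- union bound
  have hsum : ∑ ci ∈ (univ : Finset (Fin n × Bool)), ExA (7/x) (univ : Finset V) (f ci) < 1 := by
    have hsplit : ∑ ci ∈ (univ : Finset (Fin n × Bool)), ExA (7/x) (univ : Finset V) (f ci)
        = ∑ c : Fin n, (ExA (7/x) (univ : Finset V) (f (c, true))
            + ExA (7/x) (univ : Finset V) (f (c, false))) := by
      rw [Fintype.sum_prod_type]
      apply Finset.sum_congr rfl
      intro c _
      rw [Fintype.sum_bool]
    rw [hsplit]
    have hle : ∑ c : Fin n, (ExA (7/x) (univ : Finset V) (f (c, true))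
          + ExA (7/x) (univ : Finset V) (f (c, false)))
        ≤ ∑ _c : Fin n, (Real.exp (-(7*x^13)) + Real.exp (-(5*x^14))) := by
      apply Finset.sum_le_sum
      intro c _
      exact add_le_add (hb1 c) (hb2 c)
    have heq : ∑ _c : Fin n, (Real.exp (-(7*x^13)) + Real.exp (-(5*x^14)))
        = (n:ℝ) * Real.exp (-(7*x^13)) + (n:ℝ) * Real.exp (-(5*x^14)) := by
      rw [Finset.sum_const, Finset.card_univ, Fintype.card_fin, nsmul_eq_mul]
      ring
    have hfin := final_small x n hx hx16.symm
    rw [heq] at hle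
    linarith
  obtain ⟨S, _, hgood⟩ := exists_good (7/x) hp0 hp1 (univ : Finset V)
    (univ : Finset (Fin n × Bool)) f hnn hsum
  -- extract the good events
  have good1 : ∀ c : Fin n,
      41*x^14 ≤ (((colourClass col c).filter (fun e => edgeEnds e₁ e₂ e ⊆ S)).card : ℝ) := by
    intro c
    have h1 := hgood (c, true) (Finset.mem_univ _)
    rw [hft c, hbad1def] at h1
    dsimp only at h1
    have hge : 41*x^14 ≤ (∑ e ∈ colourClass col c, Zin (edgeEnds e₁ e₂ e) S) := by
      by_contra hlt
      push_neg at hlt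
      rw [if_pos hlt] at h1
      linarith
    calc (41:ℝ)*x^14 ≤ ∑ e ∈ colourClass col c, Zin (edgeEnds e₁ e₂ e) S := hge
    _ = ∑ e ∈ colourClass col c, (if edgeEnds e₁ e₂ e ⊆ S then (1:ℝ) else 0) :=
        Finset.sum_congr rfl (fun e _ => Zin_eq _ _)
    _ = (((colourClass col c).filter (fun e => edgeEnds e₁ e₂ e ⊆ S)).card : ℝ) :=
        sum_indicator_eq_card _ _
  have good2 : ∀ c : Fin n,
      (((colourClass col c).filter (fun e => (edgeEnds e₁ e₂ e ∩ S).Nonempty)).card : ℝ)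
        ≤ ((colourClass col c).card : ℝ) - x^16 - 20*x^14 := by
    intro c
    have h1 := hgood (c, false) (Finset.mem_univ _)
    rw [hff c, hbad2def] at h1
    dsimp only at h1
    have hle : (∑ e ∈ colourClass col c, Zt (edgeEnds e₁ e₂ e) S)
        ≤ ((colourClass col c).card : ℝ) - x^16 - 20*x^14 := by
      by_contra hlt
      push_neg at hlt
      rw [if_pos hlt] at h1
      linarith
    calc (((colourClass col c).filter (fun e => (edgeEnds e₁ e₂ e ∩ S).Nonempty)).card : ℝ)
        = ∑ e ∈ colourClass col c, (if (edgeEnds e₁ e₂ e ∩ S).Nonempty then (1:ℝ) else 0) :=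
          (sum_indicator_eq_card _ _).symm
    _ = ∑ e ∈ colourClass col c, Zt (edgeEnds e₁ e₂ e) S :=
          Finset.sum_congr rfl (fun e _ => (Zt_eq _ _).symm)
    _ ≤ ((colourClass col c).card : ℝ) - x^16 - 20*x^14 := hle
  -- the subgraph of edges avoiding S
  set Efil : Finset E := univ.filter (fun e => ¬((edgeEnds e₁ e₂ e ∩ S).Nonempty)) with hEfil
  have havoid : ∀ c : Fin n,
      x^16 + 20*x^14 ≤ (((colourClass col c).filter
        (fun e => ¬((edgeEnds e₁ e₂ e ∩ S).Nonempty))).card : ℝ) := by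
    intro c
    have hpart := Finset.card_filter_add_card_filter_not
      (s := colourClass col c) (p := fun e => (edgeEnds e₁ e₂ e ∩ S).Nonempty)
    have h2 := good2 c
    have h3 : (((colourClass col c).filter (fun e => (edgeEnds e₁ e₂ e ∩ S).Nonempty)).card : ℝ)
        + (((colourClass col c).filter
            (fun e => ¬((edgeEnds e₁ e₂ e ∩ S).Nonempty))).card : ℝ)
        = ((colourClass col c).card : ℝ) := by
      exact_mod_cast congrArg (Nat.cast : ℕ → ℝ) hpart
    have h15 : (0:ℝ) ≤ 20*x^15 := by positivity
    linarith [hclassCard c]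
  -- instantiate the black box on the subgraph
  set E' : Type := {e : E // e ∈ Efil} with hE'
  set f₁ : E' → V := fun e => e₁ e.1 with hf₁
  set f₂ : E' → V := fun e => e₂ e.1 with hf₂
  set col' : E' → Fin n := fun e => col e.1 with hcol'
  have hccsub : ∀ (c : Fin n) (e : E'), e ∈ colourClass col' c → e.1 ∈ colourClass col c := by
    intro c e he
    simp only [colourClass, Finset.mem_filter, Finset.mem_univ, true_and] at he ⊢
    exact he
  have hcardE' : ∀ c : Fin n, ((colourClass col' c).card : ℝ)
      = (((colourClass col c).filter (fun e => ¬((edgeEnds e₁ e₂ e ∩ S).Nonempty))).card : ℝ) := by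
    intro c
    congr 1
    apply Finset.card_bij (fun (e : E') _ => e.1)
    · intro a ha
      have h1 : a.1 ∈ colourClass col c := hccsub c a ha
      have h2 : a.1 ∈ univ.filter (fun e => ¬((edgeEnds e₁ e₂ e ∩ S).Nonempty)) := a.2
      simp only [Finset.mem_filter, Finset.mem_univ, true_and] at h2
      exact Finset.mem_filter.mpr ⟨h1, h2⟩
    · intro a _ b _ hab
      exact Subtype.ext hab
    · intro b hb
      have h1 : b ∈ colourClass col c := Finset.mem_of_mem_filter b hb
      have h2 : ¬((edgeEnds e₁ e₂ b ∩ S).Nonempty) := (Finset.mem_filter.mp hb).2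
      have h3 : b ∈ Efil := by
        rw [hEfil]
        exact Finset.mem_filter.mpr ⟨Finset.mem_univ b, h2⟩
      refine ⟨⟨b, h3⟩, ?_, rfl⟩
      simp only [colourClass, Finset.mem_filter, Finset.mem_univ, true_and] at h1 ⊢
      exact h1
  have hbbhyp : ∀ c : Fin n, IsMatchingE f₁ f₂ (colourClass col' c) ∧
      (n : ℝ) + 20 * (n : ℝ) ^ ((7 : ℝ) / 8) ≤ ((colourClass col' c).card : ℝ) := by
    intro c
    constructor
    · constructor
      · intro e he
        exact (hclassM c).1 e.1 (hccsub c e he)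
      · intro a ha b hb hab
        have h1 : edgeEnds f₁ f₂ a = edgeEnds e₁ e₂ a.1 := rfl
        have h2 : edgeEnds f₁ f₂ b = edgeEnds e₁ e₂ b.1 := rfl
        rw [h1, h2]
        exact (hclassM c).2 a.1 (hccsub c a ha) b.1 (hccsub c b hb)
          (fun h => hab (Subtype.ext h))
    · rw [← hx14, ← hx16, hcardE' c]
      exact havoid c
  obtain ⟨M', hM'm, hM'rb, hM'card⟩ := bb n V E' f₁ f₂ col' hbbhyp
  -- transfer M' back to E
  set M₀ : Finset E := M'.image (fun e => e.1) with hM₀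
  have hM₀card : M₀.card = M'.card :=
    Finset.card_image_of_injective M' Subtype.val_injective
  have hM₀mem : ∀ e ∈ M₀, ∃ a ∈ M', a.1 = e := by
    intro e he
    rw [hM₀] at he
    obtain ⟨a, ha, hae⟩ := Finset.mem_image.mp he
    exact ⟨a, ha, hae⟩
  have hM₀m : IsMatchingE e₁ e₂ M₀ := by
    constructor
    · intro e he
      obtain ⟨a, ha, rfl⟩ := hM₀mem e he
      exact hM'm.1 a ha
    · intro a ha b hb hab
      obtain ⟨a', ha', rfl⟩ := hM₀mem a ha
      obtain ⟨b', hb', rfl⟩ := hM₀mem b hb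
      exact hM'm.2 a' ha' b' hb' (fun h => hab (congrArg Subtype.val h))
  have hM₀rb : IsRainbow col M₀ := by
    intro a ha b hb hab
    rw [Finset.mem_coe] at ha hb
    obtain ⟨a', ha', rfl⟩ := hM₀mem a ha
    obtain ⟨b', hb', rfl⟩ := hM₀mem b hb
    have : a' = b' := hM'rb (Finset.mem_coe.mpr ha') (Finset.mem_coe.mpr hb') hab
    rw [this]
  have hM₀S : ∀ e ∈ M₀, edgeEnds e₁ e₂ e ∩ S = ∅ := by
    intro e he
    obtain ⟨a, _, rfl⟩ := hM₀mem e he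
    have h2 : a.1 ∈ univ.filter (fun e => ¬((edgeEnds e₁ e₂ e ∩ S).Nonempty)) := a.2
    simp only [Finset.mem_filter, Finset.mem_univ, true_and] at h2
    exact Finset.not_nonempty_iff_eq_empty.mp h2
  -- the missing colours are few
  have himcard : (M₀.image col).card = M₀.card := Finset.card_image_of_injOn hM₀rb
  have himle : (M₀.image col).card ≤ n := by
    calc (M₀.image col).card ≤ (univ : Finset (Fin n)).card := Finset.card_le_univ _
    _ = n := by rw [Finset.card_univ, Fintype.card_fin]
  have hmiss : (((univ : Finset (Fin n)) \ M₀.image col).card : ℝ) ≤ 20*x^14 := by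
    have h1 : ((univ : Finset (Fin n)) \ M₀.image col).card
        = n - (M₀.image col).card := by
      rw [Finset.card_sdiff_of_subset (Finset.subset_univ _), Finset.card_univ, Fintype.card_fin]
    have h2 : (((univ : Finset (Fin n)) \ M₀.image col).card : ℝ)
        = (n : ℝ) - ((M₀.image col).card : ℝ) := by
      rw [h1, Nat.cast_sub himle]
    have h3 : (n : ℝ) - 20 * (n : ℝ) ^ ((7:ℝ)/8) ≤ ((M₀.image col).card : ℝ) := by
      rw [himcard, hM₀card]
      exact hM'card
    rw [h2, ← hx14] at *
    linarith
  -- greedily complete the rainbow matching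
  obtain ⟨M, hM₀M, hMm, hMrb, hMim, _⟩ := greedy e₁ e₂ col S M₀ x hM₀m hM₀rb hM₀S hmiss
    hclassM good1 ((univ : Finset (Fin n)) \ M₀.image col) (Finset.Subset.refl _)
  refine ⟨M, hMm, hMrb, ?_⟩
  intro c
  have hc : c ∈ M.image col := by
    rw [hMim, Finset.union_sdiff_of_subset (Finset.subset_univ _)]
    exact Finset.mem_univ c
  obtain ⟨e, he, hec⟩ := Finset.mem_image.mp hc
  exact ⟨e, he, hec⟩
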